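/- Let F(n) = |2^n−1|_3^{-1} = 3^{ord_3(2^n−1)} and O(n) = (1/n)Σ_{d|n} μ(n/d)F(d). Then O(1) = 1, O(2·3^e) = 1 for every e ≥ 0, and O(n) = 0 for all other n. -/

import Mathlib

def F4 (d : ℕ) : ℕ := 3 ^ padicValNat 3 (2 ^ d - 1)

noncomputable def O4 (n : ℕ) : ℚ :=
  (1 / (n : ℚ)) * ∑ d ∈ n.divisors, (ArithmeticFunction.moebius (n / d) : ℚ) * (F4 d : ℚ)

instance : Fact (Nat.Prime 3) := ⟨by norm_num⟩

/-- the "inverted" function: g d = d if d = 1 or d = 2·3^e, else 0 -/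
def G4 (d : ℕ) : ℚ := if d = 1 ∨ d = 2 * 3 ^ padicValNat 3 d then (d : ℚ) else 0

lemma val_odd {n : ℕ} (h : ¬ 2 ∣ n) : padicValNat 3 (2 ^ n - 1) = 0 := by
  obtain ⟨k, hk⟩ : ∃ k, n = 2 * k + 1 := ⟨n / 2, by omega⟩
  apply padicValNat.eq_zero_of_not_dvd
  have h4 : 4 ^ k % 3 = 1 := by
    rw [Nat.pow_mod]; simp
  have hpow : 2 ^ n = 2 * 4 ^ k := by
    subst hk
    rw [pow_succ, pow_mul]
    ring
  rw [hpow]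
  have h1 : 1 ≤ 4 ^ k := Nat.one_le_pow _ _ (by norm_num)
  omega

lemma val_even (m : ℕ) (hm : m ≠ 0) :
    padicValNat 3 (2 ^ (2 * m) - 1) = 1 + padicValNat 3 m := by
  have h : padicValNat 3 (4 ^ m - 1 ^ m) = padicValNat 3 (4 - 1) + padicValNat 3 m :=
    padicValNat.pow_sub_pow (by decide) (by norm_num) (by norm_num) (by norm_num) hm
  have h2 : (2 : ℕ) ^ (2 * m) = 4 ^ m := by rw [pow_mul]; norm_num
  simpa [h2, padicValNat.self] using h

lemma F4_odd {n : ℕ} (h : ¬ 2 ∣ n) : F4 n = 1 := by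
  rw [F4, val_odd h, pow_zero]

lemma F4_even (m : ℕ) (hm : m ≠ 0) : F4 (2 * m) = 3 ^ (padicValNat 3 m + 1) := by
  rw [F4, val_even m hm, add_comm]

lemma val3_two_mul (m : ℕ) (hm : m ≠ 0) : padicValNat 3 (2 * m) = padicValNat 3 m := by
  rw [padicValNat.mul (by norm_num) hm]
  simp [padicValNat.eq_zero_of_not_dvd (by norm_num : ¬ (3:ℕ) ∣ 2)]

lemma sum_G4 : ∀ n > 0, ∑ d ∈ n.divisors, G4 d = (F4 n : ℚ) := by
  intro n hn
  have hn0 : n ≠ 0 := hn.ne'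
  -- split the sum
  have hsplit : ∀ d : ℕ, G4 d =
      (if d = 1 then (1 : ℚ) else 0) + (if d = 2 * 3 ^ padicValNat 3 d then (d : ℚ) else 0) := by
    intro d
    unfold G4
    rcases eq_or_ne d 1 with h1 | h1
    · subst h1
      simp [padicValNat.one]
    · by_cases h2 : d = 2 * 3 ^ padicValNat 3 d
      · rw [if_pos (Or.inr h2), if_neg h1, if_pos h2, zero_add]
      · rw [if_neg (by tauto), if_neg h1, if_neg h2, zero_add]
  rw [Finset.sum_congr rfl fun d _ => hsplit d, Finset.sum_add_distrib]
  have hfirst : ∑ d ∈ n.divisors, (if d = 1 then (1 : ℚ) else 0) = 1 := by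
    rw [Finset.sum_ite_eq' n.divisors 1 (fun _ => (1:ℚ))]
    simp [Nat.one_mem_divisors.mpr hn0]
  rw [hfirst]
  have hsecond : ∑ d ∈ n.divisors, (if d = 2 * 3 ^ padicValNat 3 d then (d : ℚ) else 0)
      = ∑ d ∈ n.divisors.filter (fun d => d = 2 * 3 ^ padicValNat 3 d), (d : ℚ) :=
    (Finset.sum_filter _ _).symm
  rw [hsecond]
  by_cases h2n : 2 ∣ n
  · -- even case
    set b := padicValNat 3 n with hb
    have hfil : n.divisors.filter (fun d => d = 2 * 3 ^ padicValNat 3 d)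
        = (Finset.range (b + 1)).image (fun e => 2 * 3 ^ e) := by
      ext d
      simp only [Finset.mem_filter, Nat.mem_divisors, Finset.mem_image, Finset.mem_range]
      constructor
      · rintro ⟨⟨hdvd, _⟩, heq⟩
        refine ⟨padicValNat 3 d, ?_, heq.symm⟩
        have h3 : 3 ^ padicValNat 3 d ∣ n :=
          dvd_trans (by conv_rhs => rw [heq]
                        exact dvd_mul_left _ 2) hdvd
        have := (Nat.Prime.pow_dvd_iff_le_factorization (by norm_num) hn0).mp h3
        rw [Nat.factorization_def _ (by norm_num)] at this
        omega
      · rintro ⟨e, he, rfl⟩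
        have hv : padicValNat 3 (2 * 3 ^ e) = e := by
          rw [val3_two_mul _ (by positivity), padicValNat.prime_pow]
        refine ⟨⟨?_, hn0⟩, by rw [hv]⟩
        have h3 : (3:ℕ) ^ e ∣ n := by
          rw [← Nat.factorization_def _ (by norm_num)] at hb
          exact (Nat.Prime.pow_dvd_iff_le_factorization (by norm_num) hn0).mpr (by omega)
        exact Nat.Coprime.mul_dvd_of_dvd_of_dvd
          (Nat.Coprime.pow_right e (by decide)) h2n h3
    have hinj : ∀ x ∈ Finset.range (b + 1), ∀ y ∈ Finset.range (b + 1),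
        2 * 3 ^ x = 2 * 3 ^ y → x = y := by
      intro x _ y _ h
      have h3 : (3:ℕ) ^ x = 3 ^ y := by omega
      exact Nat.pow_right_injective (by norm_num) h3
    rw [hfil, Finset.sum_image hinj]
    have hgeom : ∑ e ∈ Finset.range (b + 1), ((2 * 3 ^ e : ℕ) : ℚ)
        = 3 ^ (b + 1) - 1 := by
      push_cast
      rw [← Finset.mul_sum, geom_sum_eq (by norm_num)]
      ring
    rw [hgeom]
    obtain ⟨m, rfl⟩ := h2n
    have hm : m ≠ 0 := by rintro rfl; simp at hn0
    rw [F4_even m hm, hb, val3_two_mul m hm]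
    push_cast
    ring
  · -- odd case
    have hfil : n.divisors.filter (fun d => d = 2 * 3 ^ padicValNat 3 d) = ∅ := by
      rw [Finset.filter_eq_empty_iff]
      intro d hd heq
      have hdvd : d ∣ n := (Nat.mem_divisors.mp hd).1
      exact h2n (dvd_trans (heq ▸ dvd_mul_right 2 _ : 2 ∣ d) hdvd)
    rw [hfil]
    simp [F4_odd h2n]

lemma moebius_sum_eq (n : ℕ) (hn : 0 < n) :
    ∑ d ∈ n.divisors, (ArithmeticFunction.moebius (n / d) : ℚ) * (F4 d : ℚ) = G4 n := by
  have := (ArithmeticFunction.sum_eq_iff_sum_mul_moebius_eq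
    (f := G4) (g := fun n => (F4 n : ℚ))).mp sum_G4 n hn
  rw [← this, ← Nat.sum_divisorsAntidiagonal'
    (f := fun a b => (ArithmeticFunction.moebius a : ℚ) * (F4 b : ℚ))]

theorem orbit_counts_doubling_Z3 :
    O4 1 = 1 ∧ (∀ e : ℕ, O4 (2 * 3 ^ e) = 1) ∧
    (∀ n : ℕ, 1 ≤ n → n ≠ 1 → (¬ ∃ e : ℕ, n = 2 * 3 ^ e) → O4 n = 0) := by
  refine ⟨?_, ?_, ?_⟩
  · rw [O4, moebius_sum_eq 1 one_pos]
    simp [G4]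
  · intro e
    have hpos : 0 < 2 * 3 ^ e := by positivity
    rw [O4, moebius_sum_eq _ hpos]
    have hv : padicValNat 3 (2 * 3 ^ e) = e := by
      rw [val3_two_mul _ (by positivity), padicValNat.prime_pow]
    rw [G4, if_pos (Or.inr (by rw [hv]))]
    rw [one_div, inv_mul_cancel₀ (by positivity)]
  · intro n _ hn1 hne
    rw [O4, moebius_sum_eq n (by omega)]
    rw [G4, if_neg (by push_neg; exact ⟨hn1, fun h => hne ⟨_, h⟩⟩)]
    ring
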